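/- Let k > 2, h ≥ 1, and p = (k-1)!·h + 1. If p is prime and k is even, then (p-k)! ≡ -h (mod p). -/

import Mathlib

lemma aux15 (p : ℕ) [Fact p.Prime] :
    ∀ k, 1 ≤ k → k ≤ p →
      ((p - k).factorial : ZMod p) * ((k - 1).factorial : ZMod p) = (-1) ^ k := by
  intro k
  induction k with
  | zero => intro h1 _; omega
  | succ k ih =>
    intro _ hkp
    rcases Nat.eq_zero_or_pos k with rfl | hk1
    · simp [ZMod.wilsons_lemma]
    · have hkp' : k ≤ p := le_of_lt hkp
      have A := ih hk1 hkp'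
      have hsub : p - k = (p - (k + 1)) + 1 := by omega
      have hfac : ((p - k).factorial : ZMod p)
          = ((p - (k + 1)) + 1 : ℕ) * ((p - (k + 1)).factorial : ZMod p) := by
        rw [hsub, Nat.factorial_succ]; push_cast; ring
      have hcast : (((p - (k + 1)) + 1 : ℕ) : ZMod p) = -(k : ZMod p) := by
        have h2 : ((p - (k + 1)) + 1 : ℕ) = p - k := by omega
        rw [h2, Nat.cast_sub hkp']
        simp
      rw [hfac, hcast] at A
      have hk' : (k + 1) - 1 = k := rfl
      rw [hk', ← Nat.mul_factorial_pred hk1.ne']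
      push_cast
      linear_combination -A

theorem stmt15 (k h p : ℕ) (hk : 2 < k) (hh : 1 ≤ h) (hp : p = (k - 1).factorial * h + 1)
    (hprime : p.Prime) (hke : Even k) :
    ((p - k).factorial : ℤ) ≡ -(h : ℤ) [ZMOD p] := by
  haveI := Fact.mk hprime
  have hf1 : k - 1 ≤ (k - 1).factorial := Nat.self_le_factorial _
  have hf2 : (k - 1).factorial ≤ (k - 1).factorial * h := Nat.le_mul_of_pos_right _ hh
  have hkp : k ≤ p := by omega
  have key := aux15 p k (by omega) hkp
  rw [hke.neg_one_pow] at key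
  have hfac1 : (((k - 1).factorial * h : ℕ) : ZMod p) = -1 := by
    have h2 : ((k - 1).factorial * h : ℕ) = p - 1 := by omega
    rw [h2, Nat.cast_sub hprime.one_lt.le]
    simp
  push_cast at hfac1
  have hmain : ((p - k).factorial : ZMod p) = -(h : ZMod p) := by
    have h2 : ((p - k).factorial : ZMod p) * (((k - 1).factorial : ZMod p) * h) = h := by
      rw [← mul_assoc, key, one_mul]
    rw [hfac1] at h2
    linear_combination -h2
  rw [← ZMod.intCast_eq_intCast_iff]
  push_cast
  exact hmain
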